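/- Let (X,Y) be jointly normal with E[X] = μ_x, E[Y] = μ_y, Var(X) = σ_x² > 0, Var(Y) = σ_y² > 0 and correlation ρ with |ρ| < 1. Then for all α, β ∈ (0,1), CoVaR_{α,β} = μ_y + σ_y [ ρ Φ^{−1}(α) + √(1 − ρ²) Φ^{−1}(β) ], where Φ^{−1} is the inverse of the standard normal cumulative distribution function. -/

import Mathlib

open MeasureTheory ProbabilityTheory Set
open scoped NNReal ENNReal

noncomputable section

/-- The standard normal cumulative distribution function `Φ`. -/
def stdNormalCDF (t : ℝ) : ℝ := (gaussianReal 0 1 (Iic t)).toReal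

/-- The bivariate normal density with means `μx, μy`, standard deviations `σx, σy`
and correlation `ρ`. -/
def binormPDF (μx μy σx σy ρ : ℝ) (x y : ℝ) : ℝ :=
  1 / (2 * Real.pi * σx * σy * Real.sqrt (1 - ρ ^ 2)) *
    Real.exp (-(((x - μx) / σx) ^ 2 - 2 * ρ * ((x - μx) / σx) * ((y - μy) / σy)
      + ((y - μy) / σy) ^ 2) / (2 * (1 - ρ ^ 2)))

lemma one_sub_sq_pos {ρ : ℝ} (hρ : |ρ| < 1) : 0 < 1 - ρ ^ 2 := by
  have := sq_abs ρ
  nlinarith [abs_nonneg ρ]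

lemma binorm_factor {μx μy σx σy ρ : ℝ} (hσx : 0 < σx) (hσy : 0 < σy) (hρ : |ρ| < 1)
    (x y : ℝ) :
    binormPDF μx μy σx σy ρ x y
      = gaussianPDFReal μx (NNReal.mk (σx ^ 2) (sq_nonneg _)) x
        * gaussianPDFReal (μy + σy * ρ * ((x - μx) / σx))
            (NNReal.mk (σy ^ 2 * (1 - ρ ^ 2)) (mul_nonneg (sq_nonneg _) (one_sub_sq_pos hρ).le)) y := by
  have h1ρ : (0:ℝ) < 1 - ρ ^ 2 := one_sub_sq_pos hρ
  have h2π : (0:ℝ) < 2 * Real.pi := by positivity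
  have hs : (0:ℝ) < Real.sqrt (1 - ρ ^ 2) := Real.sqrt_pos.mpr h1ρ
  unfold binormPDF gaussianPDFReal
  rw [NNReal.coe_mk, NNReal.coe_mk]
  have e1 : Real.sqrt (2 * Real.pi * σx ^ 2) = Real.sqrt (2 * Real.pi) * σx := by
    rw [Real.sqrt_mul h2π.le, Real.sqrt_sq hσx.le]
  have e2 : Real.sqrt (2 * Real.pi * (σy ^ 2 * (1 - ρ ^ 2)))
      = Real.sqrt (2 * Real.pi) * (σy * Real.sqrt (1 - ρ ^ 2)) := by
    rw [Real.sqrt_mul h2π.le, Real.sqrt_mul (sq_nonneg σy), Real.sqrt_sq hσy.le]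
  have hden : (Real.sqrt (2 * Real.pi) * σx)
        * (Real.sqrt (2 * Real.pi) * (σy * Real.sqrt (1 - ρ ^ 2)))
      = 2 * Real.pi * σx * σy * Real.sqrt (1 - ρ ^ 2) := by
    have h2 : Real.sqrt (2 * Real.pi) * Real.sqrt (2 * Real.pi) = 2 * Real.pi :=
      Real.mul_self_sqrt h2π.le
    linear_combination (σx * σy * Real.sqrt (1 - ρ ^ 2)) * h2
  have hexp : -(x - μx) ^ 2 / (2 * σx ^ 2)
        + -(y - (μy + σy * ρ * ((x - μx) / σx))) ^ 2 / (2 * (σy ^ 2 * (1 - ρ ^ 2)))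
      = -(((x - μx) / σx) ^ 2 - 2 * ρ * ((x - μx) / σx) * ((y - μy) / σy)
          + ((y - μy) / σy) ^ 2) / (2 * (1 - ρ ^ 2)) := by
    field_simp
    ring
  rw [e1, e2, mul_mul_mul_comm, ← mul_inv, hden, ← Real.exp_add, hexp, one_div]

lemma gaussianReal_map_affine (m : ℝ) (s : ℝ) :
    (gaussianReal 0 1).map (fun x => s * x + m) = gaussianReal m (NNReal.mk (s ^ 2) (sq_nonneg _)) := by
  have h1 : (gaussianReal 0 1).map (fun x => s * x) = gaussianReal 0 (NNReal.mk (s ^ 2) (sq_nonneg _)) := by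
    have := gaussianReal_map_const_mul (μ := 0) (v := 1) s
    simpa using this
  have h2 : (fun x => s * x + m) = (fun x => x + m) ∘ (fun x => s * x) := rfl
  rw [h2, ← Measure.map_map (by fun_prop) (by fun_prop), h1,
    gaussianReal_map_add_const, zero_add]

lemma integral_Iio_gaussianPDFReal (m : ℝ) (v : ℝ≥0) (hv : v ≠ 0) (c : ℝ) :
    ∫ x in Iio c, gaussianPDFReal m v x = stdNormalCDF ((c - m) / Real.sqrt v) := by
  have hv0 : (0:ℝ) < (v:ℝ) := by exact_mod_cast pos_iff_ne_zero.mpr hv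
  have hsv : (0:ℝ) < Real.sqrt v := Real.sqrt_pos.mpr hv0
  have hvs : (NNReal.mk ((Real.sqrt v) ^ 2) (sq_nonneg _)) = v := by
    ext; simp [Real.sq_sqrt hv0.le]
  have hmap : (gaussianReal 0 1).map (fun x => Real.sqrt v * x + m) = gaussianReal m v := by
    rw [gaussianReal_map_affine m _, hvs]
  have hpre : (fun x => Real.sqrt v * x + m) ⁻¹' (Iic c) = Iic ((c - m) / Real.sqrt v) := by
    ext x
    simp only [mem_preimage, mem_Iic]
    rw [le_div_iff₀ hsv]
    constructor <;> intro h <;> nlinarith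
  have h1 : gaussianReal m v (Iic c) = gaussianReal 0 1 (Iic ((c - m) / Real.sqrt v)) := by
    rw [← hmap, Measure.map_apply (by fun_prop) measurableSet_Iic, hpre]
  rw [← integral_Iic_eq_integral_Iio]
  have h2 := gaussianReal_apply_eq_integral m hv (Iic c)
  rw [h1] at h2
  have h3 := congrArg ENNReal.toReal h2
  rw [ENNReal.toReal_ofReal (integral_nonneg fun x => gaussianPDFReal_nonneg _ _ _)] at h3
  rw [← h3]; rfl

lemma gaussianReal_Iic_toReal (m : ℝ) (v : ℝ≥0) (hv : v ≠ 0) (c : ℝ) :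
    (gaussianReal m v (Iic c)).toReal = stdNormalCDF ((c - m) / Real.sqrt v) := by
  rw [gaussianReal_apply_eq_integral _ hv,
    ENNReal.toReal_ofReal (integral_nonneg fun x => gaussianPDFReal_nonneg _ _ _),
    integral_Iic_eq_integral_Iio, integral_Iio_gaussianPDFReal _ _ hv]

lemma stdNormalCDF_strictMono : StrictMono stdNormalCDF := by
  intro x y hxy
  unfold stdNormalCDF
  have hpos : 0 < gaussianReal 0 1 (Ioc x y) := by
    rw [pos_iff_ne_zero]
    intro h
    have h2 : (volume : Measure ℝ) (Ioc x y) = 0 :=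
      gaussianReal_absolutelyContinuous' 0 one_ne_zero h
    rw [Real.volume_Ioc] at h2
    simp only [ENNReal.ofReal_eq_zero] at h2
    linarith
  have hlt : gaussianReal 0 1 (Iic x) < gaussianReal 0 1 (Iic y) := by
    calc gaussianReal 0 1 (Iic x)
        < gaussianReal 0 1 (Iic x) + gaussianReal 0 1 (Ioc x y) :=
          ENNReal.lt_add_right (measure_ne_top _ _) hpos.ne'
      _ = gaussianReal 0 1 (Iic y) := by
          rw [← measure_union (Iic_disjoint_Ioc le_rfl) measurableSet_Ioc,
            Iic_union_Ioc_eq_Iic hxy.le]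
  exact (ENNReal.toReal_lt_toReal (measure_ne_top _ _) (measure_ne_top _ _)).mpr hlt

/-- For `(X, Y)` jointly normal with means `μx, μy`, variances
`σx², σy² > 0` and correlation `ρ`, `|ρ| < 1`, for all `α, β ∈ (0,1)`:
`CoVaR_{α,β} = μy + σy (ρ Φ⁻¹(α) + √(1−ρ²) Φ⁻¹(β))`.  Here `VaR_α(X) = vα`
satisfies `Pr{X ≤ vα} = α`, and `CoVaR_{α,β} = c` is the `β`-quantile of the
conditional distribution of `Y` given `X = vα` (w.r.t. the joint density), and
`Φ⁻¹(α) = a`, `Φ⁻¹(β) = b` are characterized by `Φ(a) = α`, `Φ(b) = β`. -/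
theorem covar_bivariate_normal
    {Ω : Type*} [MeasurableSpace Ω] (P : Measure Ω) [IsProbabilityMeasure P]
    (X Y : Ω → ℝ) (hX : Measurable X) (hY : Measurable Y)
    (μx μy σx σy ρ : ℝ) (hσx : 0 < σx) (hσy : 0 < σy) (hρ : |ρ| < 1)
    (hjoint : Measure.map (fun ω => (X ω, Y ω)) P
      = (volume : Measure (ℝ × ℝ)).withDensity
          (fun p => ENNReal.ofReal (binormPDF μx μy σx σy ρ p.1 p.2)))
    (α β : ℝ) (hα : α ∈ Ioo (0:ℝ) 1) (hβ : β ∈ Ioo (0:ℝ) 1)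
    (a b : ℝ) (ha : stdNormalCDF a = α) (hb : stdNormalCDF b = β)
    -- `vα = VaR_α(X)`
    (vα : ℝ) (hvα : P {ω | X ω ≤ vα} = ENNReal.ofReal α)
    -- `c = CoVaR_{α,β}`: the `β`-quantile of the conditional density of `Y` given
    -- `X = vα`
    (c : ℝ)
    (hc : (∫ v in Iio c, binormPDF μx μy σx σy ρ vα v
        / (∫ y, binormPDF μx μy σx σy ρ vα y)) = β) :
    c = μy + σy * (ρ * a + Real.sqrt (1 - ρ ^ 2) * b) := by
  have h1ρ : (0:ℝ) < 1 - ρ ^ 2 := one_sub_sq_pos hρ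
  set vx : ℝ≥0 := NNReal.mk (σx ^ 2) (sq_nonneg _) with hvxdef
  set vy : ℝ≥0 := NNReal.mk (σy ^ 2 * (1 - ρ ^ 2)) (mul_nonneg (sq_nonneg _) h1ρ.le) with hvydef
  have hvxR : (vx:ℝ) = σx ^ 2 := rfl
  have hvyR : (vy:ℝ) = σy ^ 2 * (1 - ρ ^ 2) := rfl
  have hvx : vx ≠ 0 := NNReal.coe_ne_zero.mp (by rw [hvxR]; positivity)
  have hvy : vy ≠ 0 := NNReal.coe_ne_zero.mp (by rw [hvyR]; positivity)
  have hfac := binorm_factor (μx := μx) (μy := μy) hσx hσy hρ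
  have hsvx : Real.sqrt (vx:ℝ) = σx := by rw [hvxR, Real.sqrt_sq hσx.le]
  have hsvy : Real.sqrt (vy:ℝ) = σy * Real.sqrt (1 - ρ ^ 2) := by
    rw [hvyR, Real.sqrt_mul (sq_nonneg σy), Real.sqrt_sq hσy.le]
  have hsvy0 : (0:ℝ) < Real.sqrt (vy:ℝ) := by
    rw [hsvy]; positivity
  have hmeas : Measurable fun p : ℝ × ℝ => ENNReal.ofReal (binormPDF μx μy σx σy ρ p.1 p.2) := by
    apply Measurable.ennreal_ofReal
    unfold binormPDF
    fun_prop
  -- Step A : (vα - μx)/σx = a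
  have hinner : ∀ x, ∫⁻ y, ENNReal.ofReal (binormPDF μx μy σx σy ρ x y)
      = ENNReal.ofReal (gaussianPDFReal μx vx x) := by
    intro x
    simp_rw [hfac x, ENNReal.ofReal_mul (gaussianPDFReal_nonneg _ _ _)]
    rw [lintegral_const_mul _ ((measurable_gaussianPDFReal _ _).ennreal_ofReal),
      lintegral_gaussianPDFReal_eq_one _ hvy, mul_one]
  have hA : (vα - μx) / σx = a := by
    have hset : {ω | X ω ≤ vα} = (fun ω => (X ω, Y ω)) ⁻¹' (Iic vα ×ˢ univ) := by
      ext ω; simp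
    have hms : MeasurableSet (Iic vα ×ˢ (univ : Set ℝ)) :=
      measurableSet_Iic.prod MeasurableSet.univ
    have hmap := Measure.map_apply (μ := P) (hX.prodMk hY) hms
    rw [hjoint] at hmap
    rw [hset, ← hmap, withDensity_apply _ hms, Measure.volume_eq_prod,
      ← Measure.prod_restrict, Measure.restrict_univ,
      lintegral_prod _ hmeas.aemeasurable] at hvα
    simp only [hinner] at hvα
    have hGA : gaussianReal μx vx (Iic vα) = ENNReal.ofReal α := by
      rw [gaussianReal_apply _ hvx]
      exact hvα
    have h5 := congrArg ENNReal.toReal hGA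
    rw [ENNReal.toReal_ofReal hα.1.le, gaussianReal_Iic_toReal _ _ hvx, hsvx] at h5
    exact stdNormalCDF_strictMono.injective (by rw [h5, ha])
  -- Step B : the denominator
  have hD : (∫ y, binormPDF μx μy σx σy ρ vα y) = gaussianPDFReal μx vx vα := by
    simp_rw [hfac vα]
    rw [integral_const_mul, integral_gaussianPDFReal_eq_one _ hvy, mul_one]
  have hDpos : 0 < gaussianPDFReal μx vx vα := gaussianPDFReal_pos _ _ _ hvx
  -- Step C : conclude
  have hint : ∀ v, binormPDF μx μy σx σy ρ vα v / (∫ y, binormPDF μx μy σx σy ρ vα y)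
      = gaussianPDFReal (μy + σy * ρ * ((vα - μx) / σx)) vy v := by
    intro v
    rw [hD, hfac vα v, mul_comm, mul_div_assoc, div_self hDpos.ne', mul_one]
  simp_rw [hint] at hc
  rw [integral_Iio_gaussianPDFReal _ _ hvy] at hc
  have hB : (c - (μy + σy * ρ * ((vα - μx) / σx))) / Real.sqrt (vy:ℝ) = b :=
    stdNormalCDF_strictMono.injective (by rw [hc, hb])
  rw [div_eq_iff hsvy0.ne'] at hB
  rw [hA] at hB
  rw [hsvy] at hB
  nlinarith [hB]
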